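/- Semantic reformulation of global compatibility: let T be a TBox, let B be a concept with finite rank rf(B)=k in the rational closure construction, and let H be any set of typicality inclusions of T. Then E_k ∪ H ⊨_{ALC+T_R} T(⊤) ⊑ ¬B if and only if E_k ⊨_{ALC+T_R} T(⊤) ⊓ H̃ ⊑ ¬B, where H̃ = ⊓{¬C⊔D : T(C)⊑D ∈ H} is the materialization of H. Consequently, for sets S, S' of defeasible inclusions, S is globally compatible with B w.r.t. E_k ∪ S' (i.e., E_k ∪ S ∪ S' ⊭_{ALC+T_R} T(⊤) ⊑ ¬B) if and only if E_k ⊭_{ALC+T_R} T(⊤) ⊓ S̃ ⊓ S̃' ⊑ ¬B. -/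

import Mathlib

namespace BPDL

/-- ALC concepts over natural-number concept names and role names. -/
inductive Concept : Type where
  | name : ℕ → Concept
  | top : Concept
  | bot : Concept
  | neg : Concept → Concept
  | conj : Concept → Concept → Concept
  | disj : Concept → Concept → Concept
  | all : ℕ → Concept → Concept
  | ex : ℕ → Concept → Concept

/-- Extended concepts: ALC concepts, plus T(C) for an ALC concept C. -/
inductive ExtConcept : Type where
  | alc : Concept → ExtConcept
  | typ : Concept → ExtConcept

/-- TBox inclusions: strict C ⊑ D, or typicality T(C) ⊑ D. -/
inductive Inclusion : Type where
  | strict : Concept → Concept → Inclusion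
  | typ : Concept → Concept → Inclusion

/-- ABox assertions: C(a) or R(a,b). -/
inductive Assertion : Type where
  | conc : Concept → ℕ → Assertion
  | role : ℕ → ℕ → ℕ → Assertion

/-- Queries: C_L ⊑ C_R, C_L(a), or R(a,b), with C_L possibly of the form T(C). -/
inductive Query : Type where
  | incl : ExtConcept → Concept → Query
  | assertC : ExtConcept → ℕ → Query
  | assertR : ℕ → ℕ → ℕ → Query

/-- A knowledge base: a TBox and an ABox. -/
structure KB where
  tbox : Set Inclusion
  abox : Set Assertion

/-- min_r(A): the r-minimal elements of A. -/
def minSet {Δ : Type*} (r : Δ → Δ → Prop) (A : Set Δ) : Set Δ :=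
  {x | x ∈ A ∧ ¬ ∃ y ∈ A, r y x}

/-- Interpretation of concept, role and individual names on a domain Δ. -/
structure Valuation (Δ : Type*) where
  cname : ℕ → Set Δ
  rname : ℕ → Set (Δ × Δ)
  iname : ℕ → Δ

/-- Classical ALC interpretation of concepts. -/
def Valuation.interp {Δ : Type*} (V : Valuation Δ) : Concept → Set Δ
  | .name n => V.cname n
  | .top => Set.univ
  | .bot => ∅
  | .neg C => (V.interp C)ᶜ
  | .conj C D => V.interp C ∩ V.interp D
  | .disj C D => V.interp C ∪ V.interp D
  | .all R C => {x | ∀ y, (x, y) ∈ V.rname R → y ∈ V.interp C}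
  | .ex R C => {x | ∃ y, (x, y) ∈ V.rname R ∧ y ∈ V.interp C}

/-- ALC+T_R interpretation: irreflexive, transitive, modular, well-founded
preference relation plus a valuation; (T(C))^I = min_<(C^I). -/
structure Interp (Δ : Type) where
  lt : Δ → Δ → Prop
  lt_irrefl : ∀ x, ¬ lt x x
  lt_trans : ∀ {x y z}, lt x y → lt y z → lt x z
  lt_modular : ∀ x y z, lt x y → lt x z ∨ lt z y
  lt_wf : WellFounded lt
  V : Valuation Δ

def Interp.interpExt {Δ : Type} (M : Interp Δ) : ExtConcept → Set Δ
  | .alc C => M.V.interp C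
  | .typ C => minSet M.lt (M.V.interp C)

def Interp.satInc {Δ : Type} (M : Interp Δ) : Inclusion → Prop
  | .strict C D => M.V.interp C ⊆ M.V.interp D
  | .typ C D => minSet M.lt (M.V.interp C) ⊆ M.V.interp D

def Interp.satAssert {Δ : Type} (M : Interp Δ) : Assertion → Prop
  | .conc C a => M.V.iname a ∈ M.V.interp C
  | .role R a b => (M.V.iname a, M.V.iname b) ∈ M.V.rname R

def Interp.satQuery {Δ : Type} (M : Interp Δ) : Query → Prop
  | .incl Cl D => M.interpExt Cl ⊆ M.V.interp D
  | .assertC Cl a => M.V.iname a ∈ M.interpExt Cl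
  | .assertR R a b => (M.V.iname a, M.V.iname b) ∈ M.V.rname R

def Interp.satKB {Δ : Type} (M : Interp Δ) (K : KB) : Prop :=
  (∀ F ∈ K.tbox, M.satInc F) ∧ ∀ A ∈ K.abox, M.satAssert A

/-- Entailment of an inclusion from a set of inclusions in ALC+T_R. -/
def entails (E : Set Inclusion) (F : Inclusion) : Prop :=
  ∀ (Δ : Type) (M : Interp Δ), (∀ G ∈ E, M.satInc G) → M.satInc F

/-- Entailment of a query from a knowledge base in ALC+T_R. -/
def kbEntails (K : KB) (Q : Query) : Prop :=
  ∀ (Δ : Type) (M : Interp Δ), M.satKB K → M.satQuery Q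

/-! ### Rational closure -/

/-- C is exceptional for E iff E ⊨ T(⊤) ⊑ ¬C. -/
def exceptional (E : Set Inclusion) (C : Concept) : Prop :=
  entails E (Inclusion.typ Concept.top (Concept.neg C))

def strictPart (T : Set Inclusion) : Set Inclusion :=
  {F | F ∈ T ∧ ∃ C D, F = Inclusion.strict C D}

/-- δ(T): the typicality inclusions of T. -/
def deltaT (T : Set Inclusion) : Set Inclusion :=
  {F | F ∈ T ∧ ∃ C D, F = Inclusion.typ C D}

/-- The sequence E_0 ⊇ E_1 ⊇ … of the rational closure construction. -/
def Eseq (T : Set Inclusion) : ℕ → Set Inclusion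
  | 0 => T
  | i+1 =>
      {F | F ∈ Eseq T i ∧ ∃ C D, F = Inclusion.typ C D ∧ exceptional (Eseq T i) C}
        ∪ strictPart T

/-- rf(C) = k: k is the least i such that C is not exceptional for E_i. -/
def rankIs (T : Set Inclusion) (C : Concept) (k : ℕ) : Prop :=
  ¬ exceptional (Eseq T k) C ∧ ∀ j < k, exceptional (Eseq T j) C

/-- rf(C) = ∞: C is exceptional for every E_i. -/
def infiniteRank (T : Set Inclusion) (C : Concept) : Prop :=
  ∀ i, exceptional (Eseq T i) C

/-! ### Heights (longest descending chains) and concept ranks in a model -/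

/-- There is a chain x_0 r x_1 r … r x_n = x of length n ending at x. -/
def chainTo {Δ : Type*} (r : Δ → Δ → Prop) (x : Δ) (n : ℕ) : Prop :=
  ∃ f : ℕ → Δ, f n = x ∧ ∀ i < n, r (f i) (f (i+1))

/-- The length of the longest r-descending chain ending at x. -/
noncomputable def height {Δ : Type*} (r : Δ → Δ → Prop) (x : Δ) : ℕ :=
  sSup {n | chainTo r x n}

/-- The rank of a concept in a model: least height of one of its instances. -/
noncomputable def crank {Δ : Type*} (r : Δ → Δ → Prop) (V : Valuation Δ) (C : Concept) : ℕ :=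
  sInf {n | ∃ x ∈ V.interp C, height r x = n}

/-! ### Minimal canonical models (rational closure semantics) -/

/-- M is preferred to M' (Definition 4): same interpretation of all ALC concepts,
pointwise smaller rank, strictly somewhere. -/
def preferredTo {Δ : Type} (M M' : Interp Δ) : Prop :=
  (∀ C : Concept, M.V.interp C = M'.V.interp C) ∧
  (∀ x, height M.lt x ≤ height M'.lt x) ∧
  ∃ y, height M.lt y < height M'.lt y

def consistentWith (K : KB) (L : List Concept) : Prop :=
  ∃ (Δ : Type) (M : Interp Δ), M.satKB K ∧ ∃ x : Δ, ∀ C ∈ L, x ∈ M.V.interp C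

/-- Canonical model: every finite set of concepts consistent with K is jointly
satisfied by some domain element. -/
def Interp.canonical {Δ : Type} (M : Interp Δ) (K : KB) : Prop :=
  ∀ L : List Concept, consistentWith K L → ∃ x : Δ, ∀ C ∈ L, x ∈ M.V.interp C

/-- Minimal canonical model of K (w.r.t. TBox). -/
def minimalCanonical {Δ : Type} (M : Interp Δ) (K : KB) : Prop :=
  M.satKB K ∧ M.canonical K ∧
  ∀ M' : Interp Δ, M'.satKB K → M'.canonical K → ¬ preferredTo M' M

/-! ### BP-interpretations and BP-models -/

/-- Bi-preference interpretation: <_rc modular and ranked, < a (not necessarily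
modular) irreflexive transitive well-founded refinement; (T(C))^I = min_<(C^I). -/
structure BPInterp (Δ : Type) where
  rc : Δ → Δ → Prop
  rc_irrefl : ∀ x, ¬ rc x x
  rc_trans : ∀ {x y z}, rc x y → rc y z → rc x z
  rc_modular : ∀ x y z, rc x y → rc x z ∨ rc z y
  rc_wf : WellFounded rc
  lt : Δ → Δ → Prop
  lt_irrefl : ∀ x, ¬ lt x x
  lt_trans : ∀ {x y z}, lt x y → lt y z → lt x z
  lt_wf : WellFounded lt
  V : Valuation Δ

/-- The ALC+T_R interpretation ⟨Δ, <_rc, I⟩ underlying a BP-interpretation. -/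
def BPInterp.reduct {Δ : Type} (M : BPInterp Δ) : Interp Δ where
  lt := M.rc
  lt_irrefl := M.rc_irrefl
  lt_trans := M.rc_trans
  lt_modular := M.rc_modular
  lt_wf := M.rc_wf
  V := M.V

/-- x violates T(C) ⊑ D iff x ∈ (C ⊓ ¬D)^I. -/
def violates {Δ : Type*} (V : Valuation Δ) (x : Δ) (C D : Concept) : Prop :=
  x ∈ V.interp C ∧ x ∉ V.interp D

/-- BP-model of K: conditions (1)–(4) of Definition 9. -/
def BPInterp.isBPModel {Δ : Type} (M : BPInterp Δ) (K : KB) : Prop :=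
  (∀ C D, Inclusion.strict C D ∈ K.tbox → M.V.interp C ⊆ M.V.interp D) ∧
  (∀ C D, Inclusion.typ C D ∈ K.tbox → minSet M.rc (M.V.interp C) ⊆ M.V.interp D) ∧
  (∀ x y : Δ,
    (∃ C D, Inclusion.typ C D ∈ K.tbox ∧ violates M.V y C D) →
    (∀ Cj Dj, Inclusion.typ Cj Dj ∈ K.tbox → violates M.V x Cj Dj →
        ¬ violates M.V y Cj Dj →
      ∃ Ck Dk, Inclusion.typ Ck Dk ∈ K.tbox ∧ violates M.V y Ck Dk ∧
        ¬ violates M.V x Ck Dk ∧ crank M.rc M.V Cj < crank M.rc M.V Ck) →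
    M.lt x y) ∧
  (∀ A ∈ K.abox, M.reduct.satAssert A)

def BPInterp.interpExt {Δ : Type} (M : BPInterp Δ) : ExtConcept → Set Δ
  | .alc C => M.V.interp C
  | .typ C => minSet M.lt (M.V.interp C)

def BPInterp.satQuery {Δ : Type} (M : BPInterp Δ) : Query → Prop
  | .incl Cl D => M.interpExt Cl ⊆ M.V.interp D
  | .assertC Cl a => M.V.iname a ∈ M.interpExt Cl
  | .assertR R a b => (M.V.iname a, M.V.iname b) ∈ M.V.rname R

/-- Min_RC(K): BP-models whose reduct is a minimal canonical ALC+T_R model of K. -/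
def inMinRC {Δ : Type} (M : BPInterp Δ) (K : KB) : Prop :=
  M.isBPModel K ∧ minimalCanonical M.reduct K

/-- M' ≺_BP M (Definition 10). -/
def bpPreferredTo {Δ : Type} (M' M : BPInterp Δ) : Prop :=
  M'.V = M.V ∧ (∀ x, height M'.lt x ≤ height M.lt x) ∧
  ∃ y, height M'.lt y < height M.lt y

/-- Minimal canonical BP-model of K. -/
def minCanonicalBP {Δ : Type} (M : BPInterp Δ) (K : KB) : Prop :=
  inMinRC M K ∧ ∀ M' : BPInterp Δ, inMinRC M' K → ¬ bpPreferredTo M' M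

/-- K ⊨_BP Q: Q holds in all BP-models of K. -/
def bpEntails (K : KB) (Q : Query) : Prop :=
  ∀ (Δ : Type) (M : BPInterp Δ), M.isBPModel K → M.satQuery Q

/-- K ⊨_BP^min Q: Q holds in all minimal canonical BP-models of K. -/
def bpMinEntails (K : KB) (Q : Query) : Prop :=
  ∀ (Δ : Type) (M : BPInterp Δ), minCanonicalBP M K → M.satQuery Q

/-! ### The MP-closure -/

/-- D_i: the typicality inclusions of T with rank exactly i. -/
def Drank (T : Set Inclusion) (i : ℕ) : Set Inclusion :=
  {F | ∃ C D, F = Inclusion.typ C D ∧ F ∈ T ∧ rankIs T C i}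

/-- The subset-based seriousness ordering: S' ≺ S. -/
def serPrec (T : Set Inclusion) (S' S : Set Inclusion) : Prop :=
  ∃ h : ℕ, S ∩ Drank T h ⊂ S' ∩ Drank T h ∧
    ∀ j, h < j → S' ∩ Drank T j = S ∩ Drank T j

/-- x satisfies the materialization S̃ = ⊓{¬C⊔D : T(C)⊑D ∈ S}. -/
def matSat {Δ : Type*} (V : Valuation Δ) (S : Set Inclusion) (x : Δ) : Prop :=
  ∀ C D, Inclusion.typ C D ∈ S → x ∈ V.interp (Concept.disj (Concept.neg C) D)

/-- E ⊨ T(⊤) ⊓ S̃ ⊑ G. -/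
def entailsTopMat (E S : Set Inclusion) (G : Concept) : Prop :=
  ∀ (Δ : Type) (M : Interp Δ), (∀ F ∈ E, M.satInc F) →
    ∀ x ∈ minSet M.lt (Set.univ : Set Δ), matSat M.V S x → x ∈ M.V.interp G

/-- S ∪ E_k is a maximal set of defeasible inclusions compatible with B. -/
def maximalCompatible (T : Set Inclusion) (k : ℕ) (B : Concept) (S : Set Inclusion) : Prop :=
  S ⊆ deltaT T ∧ ¬ entailsTopMat (Eseq T k) S (Concept.neg B) ∧
  ∀ S', S' ⊆ deltaT T → serPrec T S' S → entailsTopMat (Eseq T k) S' (Concept.neg B)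

/-- T(B) ⊑ D follows from the MP-closure of T. -/
def followsMP (T : Set Inclusion) (B D : Concept) : Prop :=
  infiniteRank T B ∨ ∃ k, rankIs T B k ∧
    ∀ S, maximalCompatible T k B S →
      entailsTopMat (Eseq T k) S (Concept.disj (Concept.neg B) D)

/-! ### The skeptical closure -/

/-- The typicality inclusion F has rank i. -/
def inclRankIs (T : Set Inclusion) (F : Inclusion) (i : ℕ) : Prop :=
  ∃ C D, F = Inclusion.typ C D ∧ rankIs T C i

/-- skAcc T B k m = E_k ∪ S^B_{k-1} ∪ … ∪ S^B_{k-m}: each S^B_i consists of the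
rank-i typicality inclusions of T individually compatible with B w.r.t. the
previously accumulated set. -/
def skAcc (T : Set Inclusion) (B : Concept) (k : ℕ) : ℕ → Set Inclusion
  | 0 => Eseq T k
  | m+1 => skAcc T B k m ∪
      {F | F ∈ T ∧ inclRankIs T F (k - 1 - m) ∧
        ¬ entails (skAcc T B k m ∪ {F}) (Inclusion.typ Concept.top (Concept.neg B))}

/-- j is a good stopping point: each S^B_i with j ≤ i < k is globally compatible
with B w.r.t. the previously accumulated inclusions. -/
def goodJ (T : Set Inclusion) (B : Concept) (k : ℕ) (j : ℕ) : Prop :=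
  j < k ∧ ∀ i, j ≤ i → i < k →
    ¬ entails (skAcc T B k (k - i)) (Inclusion.typ Concept.top (Concept.neg B))

open Classical in
/-- S^{sk,B}: the skeptical closure of T w.r.t. B (with rf(B) = k finite). -/
noncomputable def skClosureSet (T : Set Inclusion) (B : Concept) (k : ℕ) : Set Inclusion :=
  if ∃ j, goodJ T B k j then skAcc T B k (k - sInf {j | goodJ T B k j})
  else Eseq T k

/-- T(B) ⊑ D is in the skeptical closure of T. -/
def inSkClosure (T : Set Inclusion) (B D : Concept) : Prop :=
  infiniteRank T B ∨ ∃ k, rankIs T B k ∧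
    entails (skClosureSet T B k)
      (Inclusion.typ Concept.top (Concept.disj (Concept.neg B) D))

end BPDL

namespace BPDL

/-! ### Auxiliary machinery for Proposition 5 -/

set_option linter.deprecated false

lemma min_univ_min {Δ : Type} (M : Interp Δ) {x : Δ}
    (h : x ∈ minSet M.lt Set.univ) {A : Set Δ} (hA : x ∈ A) :
    x ∈ minSet M.lt A :=
  ⟨hA, fun ⟨y, hy, hlt⟩ => h.2 ⟨y, trivial, hlt⟩⟩

lemma mat_to_entails {E H : Set Inclusion} {B : Concept}
    (hm : entailsTopMat E H (Concept.neg B)) :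
    entails (E ∪ H) (Inclusion.typ Concept.top (Concept.neg B)) := by
  intro Δ M hM
  show minSet M.lt (M.V.interp Concept.top) ⊆ M.V.interp (Concept.neg B)
  intro x hx
  have hxu : x ∈ minSet M.lt (Set.univ : Set Δ) := hx
  refine hm Δ M (fun G hG => hM G (Or.inl hG)) x hxu ?_
  intro C D hCD
  by_cases hc : x ∈ M.V.interp C
  · exact Or.inr (hM _ (Or.inr hCD) (min_univ_min M hxu hc))
  · exact Or.inl hc

lemma strictPart_subset_Eseq (T : Set Inclusion) : ∀ i, strictPart T ⊆ Eseq T i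
  | 0 => fun _ hF => hF.1
  | _ + 1 => fun _ hF => Or.inr hF

lemma Eseq_succ_subset (T : Set Inclusion) (i : ℕ) : Eseq T (i + 1) ⊆ Eseq T i := by
  intro F hF
  rcases hF with h | h
  · exact h.1
  · exact strictPart_subset_Eseq T i h

lemma Eseq_anti (T : Set Inclusion) {i j : ℕ} (h : i ≤ j) : Eseq T j ⊆ Eseq T i := by
  induction j with
  | zero => cases Nat.le_zero.mp h; exact fun _ hF => hF
  | succ n ih =>
      rcases Nat.lt_or_ge i (n + 1) with h' | h'
      · exact fun F hF => ih (Nat.lt_succ_iff.mp h') (Eseq_succ_subset T n hF)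
      · cases Nat.le_antisymm h h'; exact fun _ hF => hF

lemma matSat_union {Δ : Type*} (V : Valuation Δ) (S S' : Set Inclusion) (x : Δ) :
    matSat V (S ∪ S') x ↔ matSat V S x ∧ matSat V S' x := by
  constructor
  · exact fun h => ⟨fun C D hCD => h C D (Or.inl hCD), fun C D hCD => h C D (Or.inr hCD)⟩
  · rintro ⟨h1, h2⟩ C D hCD
    rcases hCD with h | h
    · exact h1 C D h
    · exact h2 C D h

/-- A witness model: a model of `E` with a minimal element of the whole domain
belonging to `C`. -/
structure Wit (E : Set Inclusion) (C : Concept) where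
  Dom : Type
  P : Interp Dom
  sat : ∀ G ∈ E, P.satInc G
  w : Dom
  wmin : w ∈ minSet P.lt Set.univ
  wC : w ∈ P.V.interp C

noncomputable def getWit {E : Set Inclusion} {C : Concept}
    (h : ¬ entails E (Inclusion.typ Concept.top (Concept.neg C))) : Wit E C := by
  refine Classical.choice ?_
  unfold entails at h
  push_neg at h
  obtain ⟨Δ, M, hM, hns⟩ := h
  have hns' : ¬ minSet M.lt (M.V.interp Concept.top) ⊆ M.V.interp (Concept.neg C) := hns
  rw [Set.not_subset] at hns'
  obtain ⟨w, hw1, hw2⟩ := hns'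
  have hwC : w ∈ M.V.interp C := not_not.mp hw2
  exact ⟨⟨Δ, M, hM, w, hw1, hwC⟩⟩

section Construction

variable (T : Set Inclusion) (k : ℕ) (H : Set Inclusion)

/-- Index of the typicality inclusions of `H` not surviving to `E_k`. -/
def Sub : Type :=
  {p : Concept × Concept //
    Inclusion.typ p.1 p.2 ∈ H ∧ Inclusion.typ p.1 p.2 ∉ Eseq T k}

lemma sub_mem_zero (hH : H ⊆ deltaT T) (p : Sub T k H) :
    Inclusion.typ p.1.1 p.1.2 ∈ Eseq T 0 := (hH p.2.1).1

open Classical in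
/-- Drop index: the first stage at which the inclusion leaves the `E_i` sequence. -/
noncomputable def ip (p : Sub T k H) : ℕ :=
  Nat.find (⟨k, p.2.2⟩ : ∃ i, Inclusion.typ p.1.1 p.1.2 ∉ Eseq T i)

open Classical in
lemma ip_not_mem (p : Sub T k H) :
    Inclusion.typ p.1.1 p.1.2 ∉ Eseq T (ip T k H p) := by
  unfold ip
  exact Nat.find_spec (⟨k, p.2.2⟩ : ∃ i, Inclusion.typ p.1.1 p.1.2 ∉ Eseq T i)

open Classical in
lemma ip_le (p : Sub T k H) : ip T k H p ≤ k := by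
  unfold ip; exact Nat.find_min' _ p.2.2

open Classical in
lemma ip_min {p : Sub T k H} {j : ℕ} (hj : j < ip T k H p) :
    Inclusion.typ p.1.1 p.1.2 ∈ Eseq T j := by
  unfold ip at hj; exact not_not.mp (Nat.find_min _ hj)

lemma ip_pos (hH : H ⊆ deltaT T) (p : Sub T k H) : 1 ≤ ip T k H p := by
  by_contra h
  have h0 : ip T k H p = 0 := by omega
  exact ip_not_mem T k H p (h0 ▸ sub_mem_zero T k H hH p)

lemma ip_pred_mem (hH : H ⊆ deltaT T) (p : Sub T k H) :
    Inclusion.typ p.1.1 p.1.2 ∈ Eseq T (ip T k H p - 1) := by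
  have := ip_pos T k H hH p
  exact ip_min T k H (by omega)

lemma not_excep (hH : H ⊆ deltaT T) (p : Sub T k H) :
    ¬ entails (Eseq T (ip T k H p - 1))
      (Inclusion.typ Concept.top (Concept.neg p.1.1)) := by
  intro hexc
  have hpos := ip_pos T k H hH p
  have hmem := ip_not_mem T k H p
  have heq : ip T k H p = (ip T k H p - 1) + 1 := by omega
  rw [heq] at hmem
  exact hmem (Or.inl ⟨ip_pred_mem T k H hH p, p.1.1, p.1.2, rfl, hexc⟩)

/-- Witness model for each dropped inclusion of `H`. -/
noncomputable def wit (hH : H ⊆ deltaT T) (p : Sub T k H) : Wit (Eseq T (ip T k H p - 1)) p.1.1 :=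
  getWit (not_excep T k H hH p)

variable (hH : H ⊆ deltaT T) (Δ : Type) (M : Interp Δ)

/-- The bottom layer: minimal elements of `M` satisfying the materialization of `H`. -/
def Zset : Set Δ := {a | a ∈ minSet M.lt Set.univ ∧ matSat M.V H a}

/-- Domain of the combined model. -/
def DN : Type := Δ ⊕ (Σ p : Sub T k H, (wit T k H hH p).Dom)

/-- Valuation of the combined model: disjoint union, roles stay within components. -/
noncomputable def VN : Valuation (DN T k H hH Δ) where
  cname n := {d | match d with
    | .inl a => a ∈ M.V.cname n
    | .inr q => q.2 ∈ (wit T k H hH q.1).P.V.cname n}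
  rname r := {dp |
    (∃ a b, dp = (Sum.inl a, Sum.inl b) ∧ (a, b) ∈ M.V.rname r) ∨
    (∃ (p : Sub T k H) (y z : (wit T k H hH p).Dom),
      dp = (Sum.inr ⟨p, y⟩, Sum.inr ⟨p, z⟩) ∧ (y, z) ∈ (wit T k H hH p).P.V.rname r)}
  iname n := Sum.inl (M.V.iname n)

lemma interpN (C : Concept) :
    (∀ a, (Sum.inl a ∈ (VN T k H hH Δ M).interp C ↔ a ∈ M.V.interp C)) ∧
    (∀ (p : Sub T k H) (y : (wit T k H hH p).Dom),
      (Sum.inr ⟨p, y⟩ ∈ (VN T k H hH Δ M).interp C ↔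
        y ∈ (wit T k H hH p).P.V.interp C)) := by
  induction C with
  | name n => exact ⟨fun a => Iff.rfl, fun p y => Iff.rfl⟩
  | top => exact ⟨fun a => by simp [Valuation.interp]; exact Set.mem_univ _, fun p y => by simp [Valuation.interp]; exact Set.mem_univ _⟩
  | bot => exact ⟨fun a => by simp [Valuation.interp]; exact fun h => h, fun p y => by simp [Valuation.interp]; exact fun h => h⟩
  | neg C ih => exact ⟨fun a => not_congr (ih.1 a), fun p y => not_congr (ih.2 p y)⟩
  | conj C D ihC ihD =>
      exact ⟨fun a => and_congr (ihC.1 a) (ihD.1 a),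
        fun p y => and_congr (ihC.2 p y) (ihD.2 p y)⟩
  | disj C D ihC ihD =>
      exact ⟨fun a => or_congr (ihC.1 a) (ihD.1 a),
        fun p y => or_congr (ihC.2 p y) (ihD.2 p y)⟩
  | all R C ih =>
      constructor
      · intro a
        constructor
        · intro h b hb
          exact (ih.1 b).mp (h (Sum.inl b) (Or.inl ⟨a, b, rfl, hb⟩))
        · rintro h e he
          rcases he with ⟨a', b, heq, hr⟩ | ⟨p, y, z, heq, hr⟩
          · injection heq with h1 h2
            injection h1 with h1
            subst h1; subst h2
            exact (ih.1 b).mpr (h b hr)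
          · injection heq with h1 _
            exact absurd h1 (by simp)
      · intro p y
        constructor
        · intro h z hz
          exact (ih.2 p z).mp (h (Sum.inr ⟨p, z⟩) (Or.inr ⟨p, y, z, rfl, hz⟩))
        · rintro h e he
          rcases he with ⟨a', b, heq, hr⟩ | ⟨p', y', z', heq, hr⟩
          · injection heq with h1 _
            exact absurd h1 (by simp)
          · injection heq with h1 h2
            injection h1 with h1
            injection h1 with hp hy
            subst hp
            have hy' := eq_of_heq hy
            subst hy'
            subst h2
            exact (ih.2 p z').mpr (h z' hr)
  | ex R C ih =>
      constructor
      · intro a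
        constructor
        · rintro ⟨e, he, hc⟩
          rcases he with ⟨a', b, heq, hr⟩ | ⟨p, y, z, heq, hr⟩
          · injection heq with h1 h2
            injection h1 with h1
            subst h1; subst h2
            exact ⟨b, hr, (ih.1 b).mp hc⟩
          · injection heq with h1 _
            exact absurd h1 (by simp)
        · rintro ⟨b, hb, hc⟩
          exact ⟨Sum.inl b, Or.inl ⟨a, b, rfl, hb⟩, (ih.1 b).mpr hc⟩
      · intro p y
        constructor
        · rintro ⟨e, he, hc⟩
          rcases he with ⟨a', b, heq, hr⟩ | ⟨p', y', z', heq, hr⟩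
          · injection heq with h1 _
            exact absurd h1 (by simp)
          · injection heq with h1 h2
            injection h1 with h1
            injection h1 with hp hy
            subst hp
            have hy' := eq_of_heq hy
            subst hy'
            subst h2
            exact ⟨z', hr, (ih.2 p z').mp hc⟩
        · rintro ⟨z, hz, hc⟩
          exact ⟨Sum.inr ⟨p, z⟩, Or.inr ⟨p, y, z, rfl, hz⟩, (ih.2 p z).mpr hc⟩

open Classical in
/-- Band (primary level) of an element of the combined model. -/
noncomputable def bandN : DN T k H hH Δ → ℕ
  | .inl a => if a ∈ Zset H Δ M then 0 else k + 1
  | .inr q => ip T k H q.1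

open Classical in
/-- Secondary level: ordinal rank inside the component. -/
noncomputable def odrN : DN T k H hH Δ → Ordinal
  | .inl a => if a ∈ Zset H Δ M then 0 else (M.lt_wf.apply a).rank
  | .inr q => ((wit T k H hH q.1).P.lt_wf.apply q.2).rank

/-- The preference relation of the combined model. -/
noncomputable def ltN (d e : DN T k H hH Δ) : Prop :=
  bandN T k H hH Δ M d < bandN T k H hH Δ M e ∨
    (bandN T k H hH Δ M d = bandN T k H hH Δ M e ∧
      odrN T k H hH Δ M d < odrN T k H hH Δ M e)

lemma ltN_wf : WellFounded (ltN T k H hH Δ M) := by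
  have hwf : WellFounded (Prod.Lex (· < · : ℕ → ℕ → Prop) (· < · : Ordinal → Ordinal → Prop)) :=
    WellFounded.prod_lex (Nat.lt_wfRel.wf) Ordinal.lt_wf
  have hinv : WellFounded (InvImage
      (Prod.Lex (· < · : ℕ → ℕ → Prop) (· < · : Ordinal → Ordinal → Prop))
      (fun d => (bandN T k H hH Δ M d, odrN T k H hH Δ M d))) :=
    InvImage.wf _ hwf
  refine Subrelation.wf ?_ hinv
  intro d e h
  rcases h with h | ⟨h1, h2⟩
  · exact Prod.Lex.left _ _ h
  · dsimp [InvImage]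
    rw [h1]
    exact Prod.Lex.right _ h2

/-- The combined ALC+T_R interpretation. -/
noncomputable def NInt : Interp (DN T k H hH Δ) where
  lt := ltN T k H hH Δ M
  lt_irrefl := by
    intro d h
    rcases h with h | ⟨_, h2⟩
    · omega
    · exact absurd h2 (lt_irrefl _)
  lt_trans := by
    intro d e f h1 h2
    rcases h1 with h1 | ⟨h1a, h1b⟩ <;> rcases h2 with h2 | ⟨h2a, h2b⟩
    · exact Or.inl (h1.trans h2)
    · exact Or.inl (h2a ▸ h1)
    · exact Or.inl (h1a ▸ h2)
    · exact Or.inr ⟨h1a.trans h2a, h1b.trans h2b⟩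
  lt_modular := by
    intro d e f h
    rcases h with h | ⟨h1, h2⟩
    · rcases Nat.lt_or_ge (bandN T k H hH Δ M d) (bandN T k H hH Δ M f) with h' | h'
      · exact Or.inl (Or.inl h')
      · exact Or.inr (Or.inl (lt_of_le_of_lt h' h))
    · rcases lt_trichotomy (bandN T k H hH Δ M d) (bandN T k H hH Δ M f) with h' | h' | h'
      · exact Or.inl (Or.inl h')
      · rcases lt_or_ge (odrN T k H hH Δ M d) (odrN T k H hH Δ M f) with h'' | h''
        · exact Or.inl (Or.inr ⟨h', h''⟩)
        · exact Or.inr (Or.inr ⟨h'.symm.trans h1, lt_of_le_of_lt h'' h2⟩)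
      · exact Or.inr (Or.inl (h1 ▸ h'))
  lt_wf := ltN_wf T k H hH Δ M
  V := VN T k H hH Δ M

end Construction

lemma entails_to_mat (T : Set Inclusion) (k : ℕ) {H : Set Inclusion} {B : Concept}
    (hH : H ⊆ deltaT T)
    (he : entails (Eseq T k ∪ H) (Inclusion.typ Concept.top (Concept.neg B))) :
    entailsTopMat (Eseq T k) H (Concept.neg B) := by
  intro Δ M hM x hx hmat
  classical
  set N := NInt T k H hH Δ M with hN
  -- interpretation lemma abbreviations
  have hil : ∀ (C : Concept) a,
      (Sum.inl a ∈ (VN T k H hH Δ M).interp C ↔ a ∈ M.V.interp C) :=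
    fun C => (interpN T k H hH Δ M C).1
  have hir : ∀ (C : Concept) (p : Sub T k H) (y : (wit T k H hH p).Dom),
      (Sum.inr ⟨p, y⟩ ∈ (VN T k H hH Δ M).interp C ↔
        y ∈ (wit T k H hH p).P.V.interp C) :=
    fun C => (interpN T k H hH Δ M C).2
  -- the combined model satisfies E_k ∪ H
  have hsat : ∀ G ∈ Eseq T k ∪ H, N.satInc G := by
    intro G hG
    have hGcase : (∃ C D, G = Inclusion.strict C D) ∨ ∃ C D, G = Inclusion.typ C D := by
      cases G with
      | strict C D => exact Or.inl ⟨C, D, rfl⟩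
      | typ C D => exact Or.inr ⟨C, D, rfl⟩
    rcases hGcase with ⟨C, D, rfl⟩ | ⟨C, D, rfl⟩
    · -- strict inclusions: componentwise
      have hGk : Inclusion.strict C D ∈ Eseq T k := by
        rcases hG with h | h
        · exact h
        · obtain ⟨_, C', D', habs⟩ := hH h
          exact absurd habs (by simp)
      show (VN T k H hH Δ M).interp C ⊆ (VN T k H hH Δ M).interp D
      intro d hd
      cases d with
      | inl a => exact (hil D a).mpr (hM _ hGk ((hil C a).mp hd))
      | inr q =>
          obtain ⟨p, y⟩ := q
          have hsub : Eseq T k ⊆ Eseq T (ip T k H p - 1) :=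
              Eseq_anti T (by have := ip_le T k H p; omega)
          exact (hir D p y).mpr ((wit T k H hH p).sat _ (hsub hGk) ((hir C p y).mp hd))
    · -- typicality inclusions
      show minSet N.lt ((VN T k H hH Δ M).interp C) ⊆ (VN T k H hH Δ M).interp D
      rintro d ⟨hdC, hdmin⟩
      cases d with
      | inl a =>
          by_cases haZ : a ∈ Zset H Δ M
          · -- bottom layer: use minimality in M plus materialization
            have haC : a ∈ M.V.interp C := (hil C a).mp hdC
            rcases hG with hGk | hGH
            · exact (hil D a).mpr (hM _ hGk (min_univ_min M haZ.1 haC))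
            · rcases haZ.2 C D hGH with hneg | hpos
              · exact absurd haC hneg
              · exact (hil D a).mpr hpos
          · -- upper M-band
            have haC : a ∈ M.V.interp C := (hil C a).mp hdC
            have hamin : a ∈ minSet M.lt (M.V.interp C) := by
              refine ⟨haC, ?_⟩
              rintro ⟨z, hzC, hlt⟩
              refine hdmin ⟨Sum.inl z, (hil C z).mpr hzC, ?_⟩
              by_cases hzZ : z ∈ Zset H Δ M
              · exact Or.inl (by simp [bandN, hzZ, haZ])
              · refine Or.inr ⟨by simp [bandN, hzZ, haZ], ?_⟩
                simpa [odrN, hzZ, haZ] using Acc.rank_lt_of_rel (M.lt_wf.apply _) hlt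
            rcases hG with hGk | hGH
            · exact (hil D a).mpr (hM _ hGk hamin)
            · by_cases hGk : Inclusion.typ C D ∈ Eseq T k
              · exact (hil D a).mpr (hM _ hGk hamin)
              · -- contradiction: the witness for this inclusion lies strictly below
                set p : Sub T k H := ⟨(C, D), hGH, hGk⟩ with hp
                refine absurd ?_ (fun h => hdmin h)
                refine ⟨Sum.inr ⟨p, (wit T k H hH p).w⟩, (hir C p _).mpr (wit T k H hH p).wC, ?_⟩
                refine Or.inl ?_
                have h1 : ip T k H p ≤ k := ip_le T k H p
                have h2 := ip_le T k H p
                simp [bandN, haZ]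
                omega
      | inr q =>
          obtain ⟨p, y⟩ := q
          have hyC : y ∈ (wit T k H hH p).P.V.interp C := (hir C p y).mp hdC
          have hymin : y ∈ minSet (wit T k H hH p).P.lt ((wit T k H hH p).P.V.interp C) := by
            refine ⟨hyC, ?_⟩
            rintro ⟨z, hzC, hlt⟩
            refine hdmin ⟨Sum.inr ⟨p, z⟩, (hir C p z).mpr hzC, ?_⟩
            refine Or.inr ⟨rfl, ?_⟩
            simpa [odrN] using Acc.rank_lt_of_rel ((wit T k H hH p).P.lt_wf.apply _) hlt
          rcases hG with hGk | hGH
          · have hsub : Eseq T k ⊆ Eseq T (ip T k H p - 1) :=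
              Eseq_anti T (by have := ip_le T k H p; omega)
            exact (hir D p y).mpr ((wit T k H hH p).sat _ (hsub hGk) hymin)
          · by_cases hGk : Inclusion.typ C D ∈ Eseq T k
            · have hsub : Eseq T k ⊆ Eseq T (ip T k H p - 1) :=
              Eseq_anti T (by have := ip_le T k H p; omega)
              exact (hir D p y).mpr ((wit T k H hH p).sat _ (hsub hGk) hymin)
            · set p' : Sub T k H := ⟨(C, D), hGH, hGk⟩ with hp'
              by_cases hip : ip T k H p' < ip T k H p
              · -- witness of p' lies strictly below: contradiction with minimality
                refine absurd ?_ (fun h => hdmin h)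
                refine ⟨Sum.inr ⟨p', (wit T k H hH p').w⟩,
                  (hir C p' _).mpr (wit T k H hH p').wC, ?_⟩
                exact Or.inl (by simpa [bandN] using hip)
              · -- the inclusion is still present in E_{ip p - 1}
                have h1 : 1 ≤ ip T k H p := ip_pos T k H hH p
                have h2 : ip T k H p - 1 < ip T k H p' := by omega
                have hmem : Inclusion.typ C D ∈ Eseq T (ip T k H p - 1) :=
                  ip_min T k H (p := p') h2
                exact (hir D p y).mpr ((wit T k H hH p).sat _ hmem hymin)
  -- apply the entailment hypothesis to the combined model
  have happ := he _ N hsat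
  have hxZ : x ∈ Zset H Δ M := ⟨hx, hmat⟩
  have hxmin : Sum.inl x ∈ minSet N.lt ((VN T k H hH Δ M).interp Concept.top) := by
    refine ⟨by simp [Valuation.interp]; exact Set.mem_univ _, ?_⟩
    rintro ⟨e, he', hlt⟩
    rcases hlt with h | ⟨h1, h2⟩
    · have : bandN T k H hH Δ M (Sum.inl x) = 0 := by simp [bandN, hxZ]
      omega
    · have : odrN T k H hH Δ M (Sum.inl x) = 0 := by simp [odrN, hxZ]
      rw [this] at h2
      exact absurd h2 (by simp)
  have hfin : Sum.inl x ∈ (VN T k H hH Δ M).interp (Concept.neg B) := happ hxmin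
  exact (hil (Concept.neg B) x).mp hfin

/-- Proposition 5 (semantic reformulation of global compatibility): for a set H
of typicality inclusions of T and B with finite rf(B)=k,
E_k ∪ H ⊨ T(⊤) ⊑ ¬B iff E_k ⊨ T(⊤) ⊓ H̃ ⊑ ¬B; consequently S is globally
compatible with B w.r.t. E_k ∪ S' iff E_k ⊭ T(⊤) ⊓ S̃ ⊓ S̃' ⊑ ¬B. -/
theorem global_compatibility_reformulation (T : Set Inclusion) (B : Concept)
    (k : ℕ) (hk : rankIs T B k) :
    (∀ H : Set Inclusion, H ⊆ deltaT T →
      (entails (Eseq T k ∪ H) (Inclusion.typ Concept.top (Concept.neg B)) ↔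
        entailsTopMat (Eseq T k) H (Concept.neg B))) ∧
    (∀ S S' : Set Inclusion, S ⊆ deltaT T → S' ⊆ deltaT T →
      (¬ entails (Eseq T k ∪ S ∪ S')
          (Inclusion.typ Concept.top (Concept.neg B)) ↔
        ¬ ∀ (Δ : Type) (M : Interp Δ), (∀ F ∈ Eseq T k, M.satInc F) →
            ∀ x ∈ minSet M.lt (Set.univ : Set Δ),
              matSat M.V S x → matSat M.V S' x →
                x ∈ M.V.interp (Concept.neg B))) := by
  have main : ∀ H : Set Inclusion, H ⊆ deltaT T →
      (entails (Eseq T k ∪ H) (Inclusion.typ Concept.top (Concept.neg B)) ↔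
        entailsTopMat (Eseq T k) H (Concept.neg B)) := by
    intro H hH
    exact ⟨fun he => entails_to_mat T k hH he, fun hm => mat_to_entails hm⟩
  refine ⟨main, ?_⟩
  intro S S' hS hS'
  have hUnion : S ∪ S' ⊆ deltaT T := Set.union_subset hS hS'
  have h1 := main (S ∪ S') hUnion
  rw [Set.union_assoc] at *
  refine not_congr (h1.trans ?_)
  constructor
  · intro h Δ M hM x hx hm1 hm2
    exact h Δ M hM x hx ((matSat_union M.V S S' x).mpr ⟨hm1, hm2⟩)
  · intro h Δ M hM x hx hm
    obtain ⟨hm1, hm2⟩ := (matSat_union M.V S S' x).mp hm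
    exact h Δ M hM x hx hm1 hm2

end BPDL
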